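/- Proposition (unstable cells of W_k). For each j ∈ {0,…,k}, the unstable cell of W_k at the vertex e_j, namely the set {x ∈ Δ_k : there exists a trajectory γ of W_k with γ(t) ∈ Δ_k for all t, γ(0) = x, and γ(t) → e_j as t → −∞}, is equal to the set {x ∈ Δ_k : x_i = 0 for every i < j, and x_j > 0} (the face of Δ_k spanned by the vertices e_j, …, e_k minus its sub-face spanned by e_{j+1}, …, e_k). -/

import Mathlib

open Finset Filter

/-- The simplicial vector field `W_k` on `ℝ^{k+1}`, given componentwise by
`(W_k x)_m = x_m * (∑_{i<m} x_i − ∑_{i>m} x_i)`. -/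
noncomputable def Wfield (k : ℕ) (x : Fin (k + 1) → ℝ) : Fin (k + 1) → ℝ :=
  fun m => x m * ((∑ i ∈ univ.filter (fun i => i < m), x i)
                - (∑ i ∈ univ.filter (fun i => m < i), x i))


noncomputable def Fc (c t : ℝ) : ℝ := c / (c + (1 - c) * Real.exp t)

lemma Fc_denom_pos {c : ℝ} (hc0 : 0 ≤ c) (hc1 : c ≤ 1) (t : ℝ) :
    0 < c + (1 - c) * Real.exp t := by
  rcases eq_or_lt_of_le hc0 with h | h
  · simp [← h]; positivity
  · have := mul_nonneg (sub_nonneg.2 hc1) (Real.exp_pos t).le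
    linarith

lemma Fc_hasDerivAt {c : ℝ} (hc0 : 0 ≤ c) (hc1 : c ≤ 1) (t : ℝ) :
    HasDerivAt (Fc c) (-(Fc c t) * (1 - Fc c t)) t := by
  have hD : HasDerivAt (fun t => c + (1 - c) * Real.exp t) ((1 - c) * Real.exp t) t := by
    simpa using ((Real.hasDerivAt_exp t).const_mul (1 - c)).const_add c
  have hpos := Fc_denom_pos hc0 hc1 t
  have := (hasDerivAt_const t c).div hD hpos.ne'
  refine this.congr_deriv (Eq.symm ?_)
  unfold Fc
  rw [pow_two]
  field_simp
  ring

lemma Fc_mono {c₁ c₂ : ℝ} (h0 : 0 ≤ c₁) (h1 : c₁ ≤ c₂) (h2 : c₂ ≤ 1) (t : ℝ) :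
    Fc c₁ t ≤ Fc c₂ t := by
  have p1 := Fc_denom_pos h0 (h1.trans h2) t
  have p2 := Fc_denom_pos (h0.trans h1) h2 t
  rw [Fc, Fc, div_le_div_iff₀ p1 p2]
  have := (Real.exp_pos t).le
  nlinarith

lemma Fc_zero (t : ℝ) : Fc 0 t = 0 := by simp [Fc]

lemma Fc_one (t : ℝ) : Fc 1 t = 1 := by simp [Fc]

lemma Fc_nonneg {c : ℝ} (hc0 : 0 ≤ c) (hc1 : c ≤ 1) (t : ℝ) : 0 ≤ Fc c t := by
  simpa [Fc_zero] using Fc_mono le_rfl hc0 hc1 t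

lemma Fc_le_one {c : ℝ} (hc0 : 0 ≤ c) (hc1 : c ≤ 1) (t : ℝ) : Fc c t ≤ 1 := by
  simpa [Fc_one] using Fc_mono hc0 hc1 le_rfl t

lemma Fc_at_zero {c : ℝ} : Fc c 0 = c := by simp [Fc]

lemma Fc_tendsto_pos {c : ℝ} (hc0 : 0 < c) : Tendsto (Fc c) atBot (nhds 1) := by
  have h : Tendsto (fun t => c + (1 - c) * Real.exp t) atBot (nhds c) := by
    have := Real.tendsto_exp_atBot.const_mul (1 - c)
    simpa using this.const_add c
  have := (tendsto_const_nhds : Tendsto (fun _ : ℝ => c) atBot (nhds c)).div h hc0.ne'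
  have e : Fc c = (fun _ : ℝ => c) / fun t => c + (1 - c) * Real.exp t := rfl
  rw [e]
  convert this using 2
  exact (div_self hc0.ne').symm

/-- conversion between sums over `Fin (k+1)` filtered by `val < N` and sums over `range N`. -/
lemma sum_filter_val_lt (k N : ℕ) (hN : N ≤ k + 1) (H : ℕ → ℝ) :
    ∑ i ∈ univ.filter (fun i : Fin (k+1) => (i : ℕ) < N), H (i : ℕ)
      = ∑ n ∈ Finset.range N, H n := by
  rw [Finset.sum_filter]
  rw [Fin.sum_univ_eq_sum_range (fun n => if n < N then H n else 0)]
  rw [← Finset.sum_filter]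
  congr 1
  ext n
  simp only [Finset.mem_filter, Finset.mem_range]
  omega


/-- Unstable cells of `W_k`: the set of points of `Δ_k` lying on a trajectory
converging to the vertex `e_j` as `t → −∞` is exactly
`{x ∈ Δ_k : x_i = 0 for i < j, and x_j > 0}`. -/
theorem Wfield_unstable_cell (k : ℕ) (j : Fin (k + 1)) :
    {x : Fin (k + 1) → ℝ | x ∈ stdSimplex ℝ (Fin (k + 1)) ∧
      ∃ γ : ℝ → Fin (k + 1) → ℝ,
        (∀ t : ℝ, HasDerivAt γ (Wfield k (γ t)) t) ∧
        (∀ t : ℝ, γ t ∈ stdSimplex ℝ (Fin (k + 1))) ∧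
        γ 0 = x ∧
        Tendsto γ atBot (nhds (Pi.single j 1))}
    = {x : Fin (k + 1) → ℝ | x ∈ stdSimplex ℝ (Fin (k + 1)) ∧
        (∀ i : Fin (k + 1), i < j → x i = 0) ∧ 0 < x j} := by
  ext x
  simp only [Set.mem_setOf_eq]
  constructor
  · rintro ⟨hx, γ, hderiv, hmem, hγ0, htend⟩
    have hd : ∀ (t : ℝ) (m : Fin (k+1)), HasDerivAt (fun s => γ s m) (Wfield k (γ t) m) t :=
      fun t m => hasDerivAt_pi.1 (hderiv t) m
    have hnn : ∀ t i, 0 ≤ γ t i := fun t i => (hmem t).1 i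
    have htot : ∀ t, ∑ i, γ t i = 1 := fun t => (hmem t).2
    refine ⟨hx, ?_, ?_⟩
    · -- vanishing of coordinates i < j
      intro i0 hi0
      set P : Finset (Fin (k+1)) := univ.filter (fun i => i < j) with hP
      set f : ℝ → ℝ := fun t => ∑ i ∈ P, γ t i with hf_def
      set f' : ℝ → ℝ := fun t => ∑ i ∈ P, Wfield k (γ t) i with hf'_def
      have hf : ∀ t, HasDerivAt f (f' t) t := fun t => HasDerivAt.fun_sum (fun i _ => hd t i)
      have hf0 : ∀ t, 0 ≤ f t := fun t => Finset.sum_nonneg fun i _ => hnn t i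
      have hf1 : ∀ t, f t ≤ 1 := by
        intro t
        rw [← htot t]
        exact Finset.sum_le_sum_of_subset_of_nonneg (Finset.filter_subset _ _)
          (fun i _ _ => hnn t i)
      have keybound : ∀ t, f' t ≤ f t * (2 * f t - 1) := by
        intro t
        have hterm : ∀ i ∈ P, Wfield k (γ t) i ≤ γ t i * (2 * f t - 1) := by
          intro i hi
          have hij : i < j := (Finset.mem_filter.1 hi).2
          have hA : ∑ l ∈ univ.filter (fun l => l < i), γ t l ≤ f t := by
            apply Finset.sum_le_sum_of_subset_of_nonneg
            · intro l hl
              simp only [hP, Finset.mem_filter, Finset.mem_univ, true_and] at hl ⊢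
              exact hl.trans hij
            · exact fun l _ _ => hnn t l
          have hB : 1 - f t ≤ ∑ l ∈ univ.filter (fun l => i < l), γ t l := by
            have hsplit := Finset.sum_filter_add_sum_filter_not univ (fun l => l < j) (γ t)
            have hsub : (univ.filter (fun l => ¬ l < j)) ⊆ univ.filter (fun l => i < l) := by
              intro l hl
              simp only [Finset.mem_filter, Finset.mem_univ, true_and, not_lt] at hl ⊢
              exact lt_of_lt_of_le hij hl
            have h1 : ∑ l ∈ univ.filter (fun l => ¬ l < j), γ t l = 1 - f t := by
              have h2 := htot t
              rw [hf_def]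
              simp only [hP]
              linarith [hsplit, h2]
            rw [← h1]
            exact Finset.sum_le_sum_of_subset_of_nonneg hsub (fun l _ _ => hnn t l)
          have hγi := hnn t i
          rw [Wfield]
          nlinarith [hA, hB]
        calc f' t ≤ ∑ i ∈ P, γ t i * (2 * f t - 1) := Finset.sum_le_sum hterm
          _ = f t * (2 * f t - 1) := by rw [hf_def, Finset.sum_mul]
      have key2 : ∀ t, f' t ≤ f t := by
        intro t
        have h0 := hf0 t
        have h1 := hf1 t
        nlinarith [keybound t]
      have ftend : Tendsto f atBot (nhds 0) := by
        have hcomp : ∀ i ∈ P, Tendsto (fun t => γ t i) atBot (nhds 0) := by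
          intro i hi
          have hij : i < j := (Finset.mem_filter.1 hi).2
          have := tendsto_pi_nhds.1 htend i
          rwa [Pi.single_eq_of_ne (ne_of_lt hij)] at this
        have := tendsto_finset_sum P hcomp
        simpa using this
      obtain ⟨S, hS⟩ := eventually_atBot.1
        (ftend.eventually (eventually_lt_nhds (by norm_num : (0:ℝ) < 1/4)))
      set t1 := min S 0 with ht1
      set g : ℝ → ℝ := fun t => f t * Real.exp (t/2) with hg_def
      have hexp : ∀ t : ℝ, HasDerivAt (fun t : ℝ => Real.exp (t/2)) (Real.exp (t/2) * (1/2)) t :=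
        fun t => ((hasDerivAt_id t).div_const 2).exp
      have hg : ∀ t, HasDerivAt g (f' t * Real.exp (t/2) + f t * (Real.exp (t/2) * (1/2))) t :=
        fun t => (hf t).mul (hexp t)
      have hganti : AntitoneOn g (Set.Iic t1) := by
        apply antitoneOn_of_deriv_nonpos (convex_Iic t1)
        · exact fun t _ => (hg t).differentiableAt.continuousAt.continuousWithinAt
        · exact fun t _ => (hg t).differentiableAt.differentiableWithinAt
        · intro t ht
          rw [interior_Iic] at ht
          rw [(hg t).deriv]
          have hfs : f t < 1/4 := hS t (le_trans (le_of_lt ht) (min_le_left _ _))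
          have h0 := hf0 t
          have hkb := keybound t
          have he := (Real.exp_pos (t/2)).le
          nlinarith [mul_le_mul_of_nonneg_right hkb he, mul_nonneg h0 he]
      have hft1 : f t1 = 0 := by
        have hb : ∀ s ≤ t1, g t1 ≤ (1/4) * Real.exp (s/2) := by
          intro s hs
          have hgs : g t1 ≤ g s := hganti (Set.mem_Iic.2 hs) (Set.mem_Iic.2 le_rfl) hs
          have hfs : f s ≤ 1/4 := le_of_lt (hS s (le_trans hs (min_le_left _ _)))
          have := mul_le_mul_of_nonneg_right hfs (Real.exp_pos (s/2)).le
          calc g t1 ≤ g s := hgs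
            _ ≤ 1/4 * Real.exp (s/2) := this
        have hlim : Tendsto (fun s : ℝ => (1/4 : ℝ) * Real.exp (s/2)) atBot (nhds 0) := by
          have h2 : Tendsto (fun s : ℝ => s/2) atBot atBot :=
            Tendsto.atBot_div_const (by norm_num) tendsto_id
          have := Real.tendsto_exp_atBot.comp h2
          simpa using this.const_mul (1/4 : ℝ)
        have hg_le : g t1 ≤ 0 := ge_of_tendsto hlim (eventually_atBot.2 ⟨t1, hb⟩)
        have h0 := hf0 t1
        have he := Real.exp_pos (t1/2)
        rw [hg_def] at hg_le
        nlinarith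
      have hexp2 : ∀ t : ℝ, HasDerivAt (fun t : ℝ => Real.exp (-t)) (Real.exp (-t) * (-1)) t :=
        fun t => (hasDerivAt_id t).neg.exp
      set h2 : ℝ → ℝ := fun t => f t * Real.exp (-t) with hh2_def
      have hh2 : ∀ t, HasDerivAt h2 (f' t * Real.exp (-t) + f t * (Real.exp (-t) * (-1))) t :=
        fun t => (hf t).mul (hexp2 t)
      have hanti2 : Antitone h2 := by
        apply antitone_of_deriv_nonpos (fun t => (hh2 t).differentiableAt)
        intro t
        rw [(hh2 t).deriv]
        have := key2 t
        have he := (Real.exp_pos (-t)).le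
        nlinarith [mul_le_mul_of_nonneg_right this he]
      have hf00 : f 0 = 0 := by
        have := hanti2 (min_le_right S 0 : t1 ≤ 0)
        rw [hh2_def] at this
        simp only [hft1] at this
        have h0 := hf0 0
        have he := Real.exp_pos (0:ℝ)
        simp only [neg_zero, Real.exp_zero, mul_one, zero_mul] at this
        rw [← ht1, hft1, zero_mul] at this
        linarith
      have hx_sum : ∑ i ∈ P, x i = 0 := by
        rw [← hγ0]
        exact hf00
      have := (Finset.sum_eq_zero_iff_of_nonneg (fun i _ => hx.1 i)).1 hx_sum
      exact this i0 (Finset.mem_filter.2 ⟨Finset.mem_univ _, hi0⟩)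
    · -- positivity of x j
      have bound : ∀ t, -(γ t j) ≤ Wfield k (γ t) j := by
        intro t
        have hA : (0:ℝ) ≤ ∑ i ∈ univ.filter (fun i => i < j), γ t i :=
          Finset.sum_nonneg fun i _ => hnn t i
        have hB : ∑ i ∈ univ.filter (fun i => j < i), γ t i ≤ 1 := by
          rw [← htot t]
          exact Finset.sum_le_sum_of_subset_of_nonneg (Finset.filter_subset _ _)
            (fun i _ _ => hnn t i)
        have := hnn t j
        rw [Wfield]
        nlinarith
      set h : ℝ → ℝ := fun t => γ t j * Real.exp t with hh_def
      have hh : ∀ t, HasDerivAt h (Wfield k (γ t) j * Real.exp t + γ t j * Real.exp t) t :=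
        fun t => (hd t j).mul (Real.hasDerivAt_exp t)
      have hmono : Monotone h := by
        apply monotone_of_deriv_nonneg (fun t => (hh t).differentiableAt)
        intro t
        rw [(hh t).deriv]
        have := bound t
        have he := (Real.exp_pos t).le
        nlinarith [mul_le_mul_of_nonneg_right this he]
      have htj : Tendsto (fun t => γ t j) atBot (nhds 1) := by
        have := tendsto_pi_nhds.1 htend j
        rwa [Pi.single_eq_same] at this
      obtain ⟨S, hS⟩ := eventually_atBot.1
        (htj.eventually (eventually_gt_nhds (by norm_num : (1:ℝ)/2 < 1)))
      set s := min S 0 with hs_def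
      have hs1 : 1/2 < γ s j := hS s (min_le_left _ _)
      have hmle : h s ≤ h 0 := hmono (min_le_right S 0)
      have h0 : h 0 = x j := by
        rw [hh_def]
        simp [hγ0]
      have hps : 0 < h s := by
        have hrfl : h s = γ s j * Real.exp s := rfl
        rw [hrfl]
        have := Real.exp_pos s
        nlinarith
      linarith [hmle, hps, h0.symm.le, h0.le]
  · rintro ⟨hx, hzero, hpos⟩
    refine ⟨hx, ?_⟩
    have hx1 : ∀ i, 0 ≤ x i := hx.1
    have hx2 : ∑ i, x i = 1 := hx.2
    set d : ℕ → ℝ := fun n => ∑ i ∈ univ.filter (fun i : Fin (k+1) => (i : ℕ) < n), x i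
      with hd_def
    have hd_nonneg : ∀ n, 0 ≤ d n := fun n => Finset.sum_nonneg fun i _ => hx1 i
    have hd_mono : Monotone d := by
      intro a b hab
      apply Finset.sum_le_sum_of_subset_of_nonneg
      · intro i hi
        simp only [Finset.mem_filter, Finset.mem_univ, true_and] at hi ⊢
        omega
      · exact fun i _ _ => hx1 i
    have hd_le_one : ∀ n, d n ≤ 1 := by
      intro n
      rw [← hx2]
      exact Finset.sum_le_sum_of_subset_of_nonneg (Finset.filter_subset _ _)
        (fun i _ _ => hx1 i)
    have hd_zero : d 0 = 0 := by simp [hd_def]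
    have hd_top : d (k + 1) = 1 := by
      rw [hd_def, ← hx2]
      congr 1
      simp [Finset.filter_true_of_mem (fun (i : Fin (k+1)) _ => i.isLt), Fin.is_le]
    have hstep : ∀ m : Fin (k+1), d ((m : ℕ) + 1) = d (m : ℕ) + x m := by
      intro m
      have h : (univ.filter (fun i : Fin (k+1) => (i : ℕ) < (m : ℕ) + 1))
          = insert m (univ.filter (fun i : Fin (k+1) => (i : ℕ) < (m : ℕ))) := by
        ext i
        simp only [Finset.mem_filter, Finset.mem_univ, true_and, Finset.mem_insert, Fin.ext_iff]
        omega
      rw [hd_def]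
      simp only [h]
      rw [Finset.sum_insert (by simp)]
      ring
    set γ : ℝ → Fin (k + 1) → ℝ := fun t m => Fc (d ((m : ℕ) + 1)) t - Fc (d (m : ℕ)) t
      with hγ_def
    have key : ∀ (t : ℝ) (N : ℕ), N ≤ k + 1 →
        ∑ i ∈ univ.filter (fun i : Fin (k+1) => (i : ℕ) < N), γ t i = Fc (d N) t := by
      intro t N hN
      have := sum_filter_val_lt k N hN (fun n => Fc (d (n + 1)) t - Fc (d n) t)
      rw [hγ_def]
      simp only at this ⊢
      rw [this, Finset.sum_range_sub (fun n => Fc (d n) t), hd_zero, Fc_zero, sub_zero]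
    have hγnonneg : ∀ t m, 0 ≤ γ t m := by
      intro t m
      exact sub_nonneg.2 (Fc_mono (hd_nonneg _) (hd_mono (Nat.le_succ _)) (hd_le_one _) t)
    have huniv : (univ.filter (fun i : Fin (k+1) => (i : ℕ) < k + 1)) = univ := by
      simp [Finset.filter_true_of_mem (fun (i : Fin (k+1)) _ => i.isLt), Fin.is_le]
    have hsum : ∀ t, ∑ m, γ t m = 1 := by
      intro t
      have := key t (k + 1) le_rfl
      rw [huniv] at this
      rw [this, hd_top, Fc_one]
    have hmem : ∀ t, γ t ∈ stdSimplex ℝ (Fin (k + 1)) := fun t => ⟨fun m => hγnonneg t m, hsum t⟩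
    refine ⟨γ, ?_, hmem, ?_, ?_⟩
    · -- derivative
      intro t
      rw [hasDerivAt_pi]
      intro m
      have h1 := Fc_hasDerivAt (hd_nonneg ((m : ℕ) + 1)) (hd_le_one _) t
      have h2 := Fc_hasDerivAt (hd_nonneg (m : ℕ)) (hd_le_one _) t
      have hsub := h1.sub h2
      refine hsub.congr_deriv (Eq.symm ?_)
      have hA : ∑ i ∈ univ.filter (fun i => i < m), γ t i = Fc (d (m : ℕ)) t := by
        rw [← key t (m : ℕ) m.isLt.le]
        apply Finset.sum_congr _ (fun _ _ => rfl)
        ext i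
        simp only [Finset.mem_filter, Finset.mem_univ, true_and, Fin.lt_def]
      have hB : ∑ i ∈ univ.filter (fun i => m < i), γ t i = 1 - Fc (d ((m : ℕ) + 1)) t := by
        have hsplit := Finset.sum_filter_add_sum_filter_not univ (fun i => m < i) (γ t)
        have h2' : ∑ i ∈ univ.filter (fun i => ¬ m < i), γ t i = Fc (d ((m : ℕ) + 1)) t := by
          rw [← key t ((m : ℕ) + 1) m.isLt]
          apply Finset.sum_congr _ (fun _ _ => rfl)
          ext i
          simp only [Finset.mem_filter, Finset.mem_univ, true_and, not_lt, Fin.le_def,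
            Fin.lt_def]
          omega
        have htot := hsum t
        rw [h2'] at hsplit
        linarith
      show Wfield k (γ t) m = _
      rw [Wfield, hA, hB]
      have : γ t m = Fc (d ((m : ℕ) + 1)) t - Fc (d (m : ℕ)) t := rfl
      rw [this]
      ring
    · -- initial condition
      funext m
      rw [hγ_def]
      simp only [Fc_at_zero, hstep m]
      ring
    · -- convergence
      rw [tendsto_pi_nhds]
      intro m
      have hdm_zero : ∀ n, n ≤ (j : ℕ) → d n = 0 := by
        intro n hn
        have h1 : d (j : ℕ) = 0 := by
          rw [hd_def]
          apply Finset.sum_eq_zero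
          intro i hi
          simp only [Finset.mem_filter, Finset.mem_univ, true_and] at hi
          exact hzero i (Fin.lt_def.2 hi)
        have := hd_mono hn
        rw [h1] at this
        exact le_antisymm this (hd_nonneg n)
      have hdm_pos : ∀ n, (j : ℕ) < n → 0 < d n := by
        intro n hn
        have h1 : d ((j : ℕ) + 1) = x j := by
          rw [hstep j, hdm_zero _ le_rfl, zero_add]
        have := hd_mono hn
        rw [h1] at this
        exact lt_of_lt_of_le hpos this
      rcases lt_trichotomy m j with hmj | hmj | hmj
      · have e1 : d (m : ℕ) = 0 := hdm_zero _ (le_of_lt (Fin.lt_def.1 hmj))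
        have e2 : d ((m : ℕ) + 1) = 0 := hdm_zero _ (Fin.lt_def.1 hmj)
        have : (fun t => γ t m) = fun _ => (0 : ℝ) := by
          funext t
          rw [hγ_def]
          simp [e1, e2, Fc_zero]
        rw [this, Pi.single_eq_of_ne (ne_of_lt hmj)]
        exact tendsto_const_nhds
      · subst hmj
        have e1 : d (m : ℕ) = 0 := hdm_zero _ le_rfl
        have h1 : Tendsto (Fc (d ((m : ℕ) + 1))) atBot (nhds 1) :=
          Fc_tendsto_pos (hdm_pos _ (Nat.lt_succ_self _))
        have h2 : Tendsto (Fc (d (m : ℕ))) atBot (nhds 0) := by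
          rw [e1]
          have : Fc (0:ℝ) = fun _ => (0:ℝ) := funext Fc_zero
          rw [this]
          exact tendsto_const_nhds
        have := h1.sub h2
        rw [Pi.single_eq_same]
        simpa using this
      · have h1 : Tendsto (Fc (d ((m : ℕ) + 1))) atBot (nhds 1) :=
          Fc_tendsto_pos (hdm_pos _ (Nat.lt_succ_of_lt (Fin.lt_def.1 hmj)))
        have h2 : Tendsto (Fc (d (m : ℕ))) atBot (nhds 1) :=
          Fc_tendsto_pos (hdm_pos _ (Fin.lt_def.1 hmj))
        have := h1.sub h2
        rw [Pi.single_eq_of_ne (ne_of_gt hmj)]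
        simpa using this
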